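/- Let Λ > 0, τ ∈ ℝ and λ ∈ {−1, 0, 1}. There exists t ∈ ℝ with Λt² − λ > 0 and Λ·t/√(Λt² − λ) = τ if and only if: (λ = −1 and τ² < Λ), or (λ = 0 and τ² = Λ), or (λ = 1 and τ² > Λ). -/
import Mathlib

private lemma stmt_17_aux (Λ τ lam c : ℝ) (hΛ : 0 < Λ) (hc : 0 < c) (hτ : τ ≠ 0)
    (hrel : τ ^ 2 - Λ = lam * c) :
    ∃ t : ℝ, 0 < Λ * t ^ 2 - lam ∧
      Λ * t / Real.sqrt (Λ * t ^ 2 - lam) = τ := by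
  have hs2 : Real.sqrt (Λ * c) ^ 2 = Λ * c := Real.sq_sqrt (by positivity)
  set s := Real.sqrt (Λ * c) with hs
  have hspos : 0 < s := Real.sqrt_pos.mpr (by positivity)
  have hE : Λ * (τ / s) ^ 2 - lam = (Λ / s) ^ 2 := by
    field_simp
    nlinarith [hs2, hrel]
  refine ⟨τ / s, ?_, ?_⟩
  · rw [hE]; positivity
  · rw [hE, Real.sqrt_sq (by positivity)]
    field_simp

/-- classification of which Nariai space-time (`λ = −1, 0, 1`)
admits a CMC slice of mean curvature `τ`: the equation
`Λt/√(Λt² − λ) = τ` has a solution with `Λt² − λ > 0` iff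
(`λ = −1` and `τ² < Λ`), or (`λ = 0` and `τ² = Λ`), or (`λ = 1` and `τ² > Λ`). -/
theorem stmt_17 (Λ τ lam : ℝ) (hΛ : 0 < Λ)
    (hlam : lam = -1 ∨ lam = 0 ∨ lam = 1) :
    (∃ t : ℝ, 0 < Λ * t ^ 2 - lam ∧
        Λ * t / Real.sqrt (Λ * t ^ 2 - lam) = τ) ↔
      ((lam = -1 ∧ τ ^ 2 < Λ) ∨ (lam = 0 ∧ τ ^ 2 = Λ) ∨
        (lam = 1 ∧ Λ < τ ^ 2)) := by
  constructor
  · rintro ⟨t, hD, ht⟩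
    have hDs : 0 < Real.sqrt (Λ * t ^ 2 - lam) := Real.sqrt_pos.mpr hD
    have hτ2 : τ ^ 2 = Λ ^ 2 * t ^ 2 / (Λ * t ^ 2 - lam) := by
      rw [← ht, div_pow, Real.sq_sqrt hD.le]
      ring_nf
    have key : τ ^ 2 - Λ = Λ * lam / (Λ * t ^ 2 - lam) := by
      rw [hτ2]
      field_simp
      ring
    rcases hlam with h | h | h
    · left; refine ⟨h, ?_⟩
      have : Λ * lam / (Λ * t ^ 2 - lam) < 0 :=
        div_neg_of_neg_of_pos (by rw [h]; nlinarith) hD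
      linarith
    · right; left; refine ⟨h, ?_⟩
      have : Λ * lam / (Λ * t ^ 2 - lam) = 0 := by rw [h]; simp
      linarith
    · right; right; refine ⟨h, ?_⟩
      have : 0 < Λ * lam / (Λ * t ^ 2 - lam) :=
        div_pos (by rw [h]; linarith) hD
      linarith
  · rintro (⟨h, hτ⟩ | ⟨h, hτ⟩ | ⟨h, hτ⟩)
    · rcases eq_or_ne τ 0 with h0 | h0
      · refine ⟨0, by rw [h]; norm_num, by rw [h0]; simp⟩
      · exact stmt_17_aux Λ τ lam (Λ - τ ^ 2) hΛ (by linarith) h0 (by rw [h]; ring)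
    · have h0 : τ ≠ 0 := by intro h0; rw [h0] at hτ; simp at hτ; linarith
      exact stmt_17_aux Λ τ lam 1 hΛ one_pos h0 (by rw [h, hτ]; ring)
    · have h0 : τ ≠ 0 := by intro h0; rw [h0] at hτ; simp at hτ; linarith
      exact stmt_17_aux Λ τ lam (τ ^ 2 - Λ) hΛ (by linarith) h0 (by rw [h]; ring)
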